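/- A standard permutation π of {±1,...,±n} is sign-connected if and only if for all m < 2n, the partial sum π(1)+π(2)+...+π(m) > 0. -/

import Mathlib

/-- A sequence `π` lists each element of `{±1, …, ±n}` exactly once among
positions `0, …, 2n-1`. -/
def IsSgnPerm (n : ℕ) (π : ℕ → ℤ) : Prop :=
  (Finset.range (2*n)).image π = (Finset.Icc (-(n:ℤ)) (n:ℤ)).erase 0

/-- A standard permutation of `{±1, …, ±n}`: each `i` appears before `-i`, and
the negative entries appear in the order `-1, -2, …, -n`. -/
def IsStdPerm (n : ℕ) (π : ℕ → ℤ) : Prop :=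
  IsSgnPerm n π ∧
  (∀ k l, k < 2*n → l < 2*n → 0 < π k → π l = -π k → k < l) ∧
  (∀ k l, k < 2*n → l < 2*n → π k < 0 → π l < 0 → (k < l ↔ π l < π k))

/-- Sign-connectedness: every proper nonempty initial segment contains exactly
one element of some pair `{j, -j}`. -/
def SignConnected (n : ℕ) (π : ℕ → ℤ) : Prop :=
  ∀ m, 1 ≤ m → m < 2*n → ∃ j : ℤ, 1 ≤ j ∧ j ≤ n ∧
    Xor' (∃ i < m, π i = j) (∃ i < m, π i = -j)

/-- A standard permutation of `{±1,…,±n}` is sign-connected iff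
all proper nonempty partial sums are positive. -/
theorem stmt_0 (n : ℕ) (π : ℕ → ℤ) (hπ : IsStdPerm n π) :
    SignConnected n π ↔ ∀ m, 1 ≤ m → m < 2*n → 0 < ∑ i ∈ Finset.range m, π i := by
  obtain ⟨hperm, hstd, -⟩ := hπ
  rw [SignConnected]
  have hinj : Set.InjOn π (Finset.range (2*n)) := by
    apply Finset.injOn_of_card_image_eq
    rw [hperm, Finset.card_range]
    rcases Nat.eq_zero_or_pos n with h0 | h0
    · subst h0; simp
    · rw [Finset.card_erase_of_mem (by simp), Int.card_Icc]
      omega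
  have hmem : ∀ i, i < 2*n → π i ≠ 0 ∧ -(n:ℤ) ≤ π i ∧ π i ≤ n := by
    intro i hi
    have : π i ∈ (Finset.Icc (-(n:ℤ)) (n:ℤ)).erase 0 := by
      rw [← hperm]; exact Finset.mem_image_of_mem π (Finset.mem_range.mpr hi)
    simp only [Finset.mem_erase, Finset.mem_Icc] at this
    tauto
  have hsurj : ∀ x : ℤ, x ≠ 0 → -(n:ℤ) ≤ x → x ≤ n → ∃ i, i < 2*n ∧ π i = x := by
    intro x hx h1 h2
    have : x ∈ (Finset.range (2*n)).image π := by
      rw [hperm]; simp [hx, h1, h2]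
    simpa [Finset.mem_image, Finset.mem_range] using this
  -- pointwise equivalence
  have key : ∀ m, 1 ≤ m → m < 2*n →
      ((∃ j : ℤ, 1 ≤ j ∧ j ≤ n ∧ Xor' (∃ i < m, π i = j) (∃ i < m, π i = -j)) ↔
        0 < ∑ i ∈ Finset.range m, π i) := by
    intro m h1 h2
    set A : Finset ℤ := (Finset.range m).image π with hA
    have hmemA : ∀ x, x ∈ A ↔ ∃ i < m, π i = x := by
      intro x; simp [hA, Finset.mem_image, Finset.mem_range]
    set C : Finset ℤ := A.filter (fun x => -x ∉ A) with hC
    have hAfacts : ∀ x ∈ A, x ≠ 0 ∧ -(n:ℤ) ≤ x ∧ x ≤ n := by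
      intro x hx
      obtain ⟨i, him, hix⟩ := (hmemA x).mp hx
      exact hix ▸ hmem i (lt_trans him h2)
    have hCpos : ∀ x ∈ C, 0 < x := by
      intro x hx
      rw [hC, Finset.mem_filter] at hx
      obtain ⟨hxA, hnx⟩ := hx
      obtain ⟨hx0, hxl, hxu⟩ := hAfacts x hxA
      rcases lt_or_gt_of_ne hx0 with hneg | hpos
      · exfalso
        obtain ⟨i, him, hix⟩ := (hmemA x).mp hxA
        obtain ⟨l, hl, hlx⟩ := hsurj (-x) (by omega) (by omega) (by omega)
        have hlim : l < i := hstd l i hl (lt_trans him h2) (by omega) (by omega)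
        exact hnx ((hmemA (-x)).mpr ⟨l, lt_trans hlim him, hlx⟩)
      · exact hpos
    have hsum : ∑ i ∈ Finset.range m, π i = ∑ x ∈ A, x := by
      rw [hA, Finset.sum_image]
      intro i hi j hj h
      simp only [Finset.coe_range, Set.mem_Iio, Finset.mem_coe, Finset.mem_range] at hi hj
      exact hinj (by simp only [Finset.coe_range, Set.mem_Iio]; omega)
        (by simp only [Finset.coe_range, Set.mem_Iio]; omega) h
    have hBzero : ∑ x ∈ A.filter (fun x => -x ∈ A), x = 0 := by
      apply Finset.sum_involution (fun a _ => -a)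
      · intro a ha; ring
      · intro a ha h
        have := hAfacts a (Finset.mem_filter.mp ha).1
        omega
      · intro a ha; exact neg_neg a
      · intro a ha
        simp only [Finset.mem_filter] at ha ⊢
        exact ⟨ha.2, by simpa using ha.1⟩
    have hsplit : ∑ x ∈ A, x = ∑ x ∈ C, x := by
      rw [← Finset.sum_filter_add_sum_filter_not A (fun x => -x ∈ A), hBzero, zero_add, hC]
    rw [hsum, hsplit]
    constructor
    · rintro ⟨j, hj1, hjn, hxor⟩
      have hCne : C.Nonempty := by
        rcases hxor with ⟨hpos, hneg⟩ | ⟨hneg, hpos⟩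
        · refine ⟨j, ?_⟩
          rw [hC, Finset.mem_filter]
          refine ⟨(hmemA j).mpr hpos, fun h => hneg ((hmemA (-j)).mp h)⟩
        · exfalso
          obtain ⟨i, him, hij⟩ := hneg
          obtain ⟨l, hl, hlj⟩ := hsurj j (by omega) (by omega) (by omega)
          have : l < i := hstd l i hl (lt_trans him h2) (by omega) (by omega)
          exact hpos ⟨l, lt_trans this him, hlj⟩
      exact Finset.sum_pos hCpos hCne
    · intro hpos
      have hCne : C.Nonempty := by
        by_contra h
        rw [Finset.not_nonempty_iff_eq_empty] at h
        rw [h, Finset.sum_empty] at hpos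
        exact lt_irrefl 0 hpos
      obtain ⟨x, hx⟩ := hCne
      have hxpos := hCpos x hx
      rw [hC, Finset.mem_filter] at hx
      obtain ⟨hx0, hxl, hxu⟩ := hAfacts x hx.1
      refine ⟨x, by omega, hxu, Or.inl ⟨(hmemA x).mp hx.1, fun h => hx.2 ((hmemA (-x)).mpr h)⟩⟩
  exact ⟨fun H m a b => (key m a b).mp (H m a b), fun H m a b => (key m a b).mpr (H m a b)⟩
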